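/- arXiv:2011.08360 — 2 statements merged into one kernel-verified Lean document; each statement's English description precedes it below -/
import Mathlib

section
/- Let A : ℝ^{p₁×p₂} → ℝⁿ be a linear map with restricted isometry constants R_k. Let Z₁, Z₂ ∈ ℝ^{p₁×p₂} be matrices of ranks r₁ and r₂ respectively with ⟨Z₁, Z₂⟩ = 0 and r₁ + r₂ ≤ min(p₁,p₂). Then |⟨A(Z₁), A(Z₂)⟩| ≤ R_{r₁+r₂} ‖Z₁‖_F ‖Z₂‖_F. -/
open Matrix
noncomputable section

/-- Frobenius norm of a real matrix. -/
def frob {m n : Type*} [Fintype m] [Fintype n] (A : Matrix m n ℝ) : ℝ :=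
  Real.sqrt (∑ i, ∑ j, (A i j) ^ 2)

/-- Spectral (operator ℓ²→ℓ²) norm of a real matrix. -/
def spec {m n : Type*} [Fintype m] [Fintype n] [DecidableEq n] (A : Matrix m n ℝ) : ℝ :=
  ‖LinearMap.toContinuousLinearMap (Matrix.toEuclideanLin A)‖

/-- Nuclear norm: sum of singular values (square roots of eigenvalues of AᵀA). -/
def nuc {m n : Type*} [Fintype m] [Fintype n] [DecidableEq n] (A : Matrix m n ℝ) : ℝ :=
  ∑ i, Real.sqrt ((show (Aᵀ * A).IsHermitian by
    simpa [Matrix.conjTranspose_eq_transpose_of_trivial] using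
      Matrix.isHermitian_conjTranspose_mul_self A).eigenvalues i)

lemma rank_combo_le {p₁ p₂ : ℕ} (a b : ℝ) (Z₁ Z₂ : Matrix (Fin p₁) (Fin p₂) ℝ) :
    (a • Z₁ + b • Z₂).rank ≤ Z₁.rank + Z₂.rank := by
  unfold Matrix.rank
  have hle : LinearMap.range (a • Z₁ + b • Z₂).mulVecLin ≤
      LinearMap.range Z₁.mulVecLin ⊔ LinearMap.range Z₂.mulVecLin := by
    rintro x ⟨v, rfl⟩
    have : (a • Z₁ + b • Z₂).mulVecLin v = a • Z₁.mulVecLin v + b • Z₂.mulVecLin v := by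
      simp [Matrix.mulVecLin, Matrix.add_mulVec, Matrix.smul_mulVec]
    rw [this]
    exact Submodule.add_mem _
      (Submodule.mem_sup_left (Submodule.smul_mem _ _ ⟨v, rfl⟩))
      (Submodule.mem_sup_right (Submodule.smul_mem _ _ ⟨v, rfl⟩))
  calc Module.finrank ℝ (LinearMap.range (a • Z₁ + b • Z₂).mulVecLin)
      ≤ Module.finrank ℝ ↥(LinearMap.range Z₁.mulVecLin ⊔ LinearMap.range Z₂.mulVecLin) :=
        Submodule.finrank_mono hle
    _ ≤ _ := Submodule.finrank_add_le_finrank_add_finrank _ _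

lemma frob_sq {m n : Type*} [Fintype m] [Fintype n] (A : Matrix m n ℝ) :
    frob A ^ 2 = ∑ i, ∑ j, (A i j) ^ 2 := by
  unfold frob
  rw [Real.sq_sqrt]
  positivity

lemma frob_nonneg {m n : Type*} [Fintype m] [Fintype n] (A : Matrix m n ℝ) :
    0 ≤ frob A := Real.sqrt_nonneg _

lemma frob_eq_zero {m n : Type*} [Fintype m] [Fintype n] (A : Matrix m n ℝ)
    (h : frob A = 0) : A = 0 := by
  have h2 : ∑ i, ∑ j, (A i j) ^ 2 = 0 := by
    have := frob_sq A
    rw [h] at this; linarith [this]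
  ext i j
  have hnn : ∀ i ∈ (Finset.univ : Finset m), 0 ≤ ∑ j, (A i j) ^ 2 := by
    intro i _; positivity
  have hi := (Finset.sum_eq_zero_iff_of_nonneg hnn).mp h2 i (Finset.mem_univ i)
  have hj := (Finset.sum_eq_zero_iff_of_nonneg (fun j _ => sq_nonneg (A i j))).mp hi j
    (Finset.mem_univ j)
  simpa using pow_eq_zero_iff (n := 2) (by norm_num) |>.mp hj

/-- Restricted orthogonality: for orthogonal low-rank matrices Z₁, Z₂,
|⟨A(Z₁), A(Z₂)⟩| ≤ R_{r₁+r₂} ‖Z₁‖_F ‖Z₂‖_F. -/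
theorem stmt_3 {p₁ p₂ n r₁ r₂ : ℕ}
    (A : Matrix (Fin p₁) (Fin p₂) ℝ →ₗ[ℝ] (Fin n → ℝ))
    (R : ℝ)
    (hRIP : ∀ Z : Matrix (Fin p₁) (Fin p₂) ℝ, Z.rank ≤ r₁ + r₂ →
      (1 - R) * frob Z ^ 2 ≤ ∑ i, A Z i ^ 2 ∧ ∑ i, A Z i ^ 2 ≤ (1 + R) * frob Z ^ 2)
    (Z₁ Z₂ : Matrix (Fin p₁) (Fin p₂) ℝ)
    (h₁ : Z₁.rank = r₁) (h₂ : Z₂.rank = r₂)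
    (horth : ∑ i, ∑ j, Z₁ i j * Z₂ i j = 0)
    (hr : r₁ + r₂ ≤ min p₁ p₂) :
    |∑ i, A Z₁ i * A Z₂ i| ≤ R * frob Z₁ * frob Z₂ := by
  set a := frob Z₁ with ha_def
  set b := frob Z₂ with hb_def
  rcases eq_or_lt_of_le (frob_nonneg Z₁) with ha0 | ha
  · have hZ : Z₁ = 0 := frob_eq_zero _ ha0.symm
    have haz : a = 0 := ha0.symm
    rw [haz]
    simp [hZ]
  rcases eq_or_lt_of_le (frob_nonneg Z₂) with hb0 | hb
  · have hZ : Z₂ = 0 := frob_eq_zero _ hb0.symm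
    have hbz : b = 0 := hb0.symm
    rw [hbz]
    simp [hZ]
  set S := ∑ i, A Z₁ i * A Z₂ i with hS_def
  set q₁ := ∑ i, A Z₁ i ^ 2 with hq₁_def
  set q₂ := ∑ i, A Z₂ i ^ 2 with hq₂_def
  -- frobenius of combinations
  have hfrob : ∀ c : ℝ, frob (b • Z₁ + c • Z₂) ^ 2 = b ^ 2 * a ^ 2 + c ^ 2 * b ^ 2 := by
    intro c
    rw [frob_sq]
    have key : ∀ x y : ℝ, (b * x + c * y) ^ 2
        = b ^ 2 * x ^ 2 + c ^ 2 * y ^ 2 + 2 * b * c * (x * y) := by intros; ring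
    have : ∑ i, ∑ j, ((b • Z₁ + c • Z₂) i j) ^ 2
        = b ^ 2 * (∑ i, ∑ j, Z₁ i j ^ 2) + c ^ 2 * (∑ i, ∑ j, Z₂ i j ^ 2)
          + 2 * b * c * (∑ i, ∑ j, Z₁ i j * Z₂ i j) := by
      simp_rw [Matrix.add_apply, Matrix.smul_apply, smul_eq_mul, key,
        Finset.sum_add_distrib, Finset.mul_sum]
    rw [this, horth, ha_def, hb_def, frob_sq, frob_sq]
    ring
  -- image sums of combinations
  have himg : ∀ c : ℝ, ∑ i, A (b • Z₁ + c • Z₂) i ^ 2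
      = b ^ 2 * q₁ + c ^ 2 * q₂ + 2 * b * c * S := by
    intro c
    have hA : A (b • Z₁ + c • Z₂) = b • A Z₁ + c • A Z₂ := by
      simp only [map_add, LinearMap.map_smul]
    have key : ∀ x y : ℝ, (b * x + c * y) ^ 2
        = b ^ 2 * x ^ 2 + c ^ 2 * y ^ 2 + 2 * b * c * (x * y) := by intros; ring
    rw [hA]
    simp only [Pi.add_apply, Pi.smul_apply, smul_eq_mul]
    simp_rw [key]
    rw [Finset.sum_add_distrib, Finset.sum_add_distrib, ← Finset.mul_sum, ← Finset.mul_sum,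
      ← Finset.mul_sum, ← hq₁_def, ← hq₂_def, ← hS_def]
  have hrank : ∀ c : ℝ, (b • Z₁ + c • Z₂).rank ≤ r₁ + r₂ := by
    intro c
    calc (b • Z₁ + c • Z₂).rank ≤ Z₁.rank + Z₂.rank := rank_combo_le _ _ _ _
      _ = r₁ + r₂ := by rw [h₁, h₂]
  have Hp := hRIP (b • Z₁ + a • Z₂) (hrank a)
  have Hm := hRIP (b • Z₁ + (-a) • Z₂) (hrank (-a))
  rw [himg a, hfrob a] at Hp
  rw [himg (-a), hfrob (-a)] at Hm
  obtain ⟨hlop, hupp⟩ := Hp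
  obtain ⟨hlom, hupm⟩ := Hm
  rw [abs_le]
  constructor
  · nlinarith [mul_pos ha hb, mul_pos (mul_pos ha hb) (mul_pos ha hb)]
  · nlinarith [mul_pos ha hb, mul_pos (mul_pos ha hb) (mul_pos ha hb)]
end
end

section
/- Let X₁ = U₁ Σ₁ V₁ᵀ and X₂ = U₂ Σ₂ V₂ᵀ be two rank-r matrices in ℝ^{p₁×p₂} with their singular value decompositions. Then ‖U₁U₁ᵀ − U₂U₂ᵀ‖ ≤ ‖X₁ − X₂‖ / max(σ_r(X₁), σ_r(X₂)), where ‖·‖ is the spectral norm and σ_r denotes the r-th largest singular value. -/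
open Matrix
open scoped Matrix.Norms.L2Operator
noncomputable section

section SpecAux

set_option linter.unusedSectionVars false

variable {m n l k : Type*} [Fintype m] [Fintype n] [Fintype l] [Fintype k]
  [DecidableEq m] [DecidableEq n] [DecidableEq l] [DecidableEq k]


/-- view a Euclidean vector as a plain function -/
def cv {m : Type*} (x : EuclideanSpace ℝ m) : m → ℝ := x

def TM (A : Matrix m n ℝ) : EuclideanSpace ℝ n →L[ℝ] EuclideanSpace ℝ m :=
  LinearMap.toContinuousLinearMap (Matrix.toEuclideanLin A)

lemma TM_apply (A : Matrix m n ℝ) (x : EuclideanSpace ℝ n) (i : m) :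
    (TM A x) i = (A *ᵥ x) i := rfl
lemma nsq (x : EuclideanSpace ℝ m) : ‖x‖ ^ 2 = ∑ i, (x i) ^ 2 := by
  rw [EuclideanSpace.norm_eq, Real.sq_sqrt (by positivity)]; simp [sq_abs]
lemma le_of_sq (a b : ℝ) (ha : 0 ≤ a) (hb : 0 ≤ b) (h : a ^ 2 ≤ b ^ 2) : a ≤ b := by nlinarith
lemma norm_TM (A : Matrix m n ℝ) : ‖A‖ = ‖TM A‖ := rfl
lemma spec_le_bound (A : Matrix m n ℝ) (c : ℝ) (hc : 0 ≤ c)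
    (h : ∀ x : EuclideanSpace ℝ n, ‖TM A x‖ ≤ c * ‖x‖) : ‖A‖ ≤ c := by
  rw [norm_TM]; exact ContinuousLinearMap.opNorm_le_bound _ hc h

lemma spec_diagonal_le (d : n → ℝ) (c : ℝ) (hc : 0 ≤ c) (h : ∀ i, |d i| ≤ c) :
    ‖(diagonal d : Matrix n n ℝ)‖ ≤ c := by
  apply spec_le_bound _ _ hc
  intro x
  apply le_of_sq _ _ (norm_nonneg _) (mul_nonneg hc (norm_nonneg _))
  rw [nsq, mul_pow, nsq, Finset.mul_sum]
  apply Finset.sum_le_sum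
  intro i _
  rw [TM_apply, mulVec_diagonal]
  have hi := h i
  nlinarith [sq_abs (d i), abs_nonneg (d i), sq_nonneg (x i),
    mul_le_mul hi hi (abs_nonneg (d i)) hc]

lemma spec_le_of_unit (A : Matrix m n ℝ) (c : ℝ) (hc : 0 ≤ c)
    (h : ∀ x : EuclideanSpace ℝ n, ‖x‖ = 1 → ‖TM A x‖ ≤ c) : ‖A‖ ≤ c := by
  rw [norm_TM]
  exact ContinuousLinearMap.opNorm_le_of_unit_norm hc h

lemma exists_unit_norm_attained [Nonempty n] (A : Matrix m n ℝ) :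
    ∃ x : EuclideanSpace ℝ n, ‖x‖ = 1 ∧ ‖TM A x‖ = ‖A‖ := by
  haveI : Nontrivial (EuclideanSpace ℝ n) := by
    refine ⟨0, EuclideanSpace.single (Classical.arbitrary n) 1, fun h => ?_⟩
    have := congrFun (congrArg (fun z : EuclideanSpace ℝ n => (z : n → ℝ)) h)
      (Classical.arbitrary n)
    simp [EuclideanSpace.single_apply] at this
  obtain ⟨x, hx, hmax⟩ := (isCompact_sphere (0 : EuclideanSpace ℝ n) 1).exists_isMaxOn
    (NormedSpace.sphere_nonempty.mpr zero_le_one)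
    ((TM A).continuous.norm.continuousOn)
  simp only [mem_sphere_iff_norm, sub_zero] at hx
  refine ⟨x, hx, le_antisymm ?_ ?_⟩
  · calc ‖TM A x‖ ≤ ‖TM A‖ * ‖x‖ := ContinuousLinearMap.le_opNorm _ _
      _ = ‖A‖ := by rw [hx, mul_one, norm_TM]
  · apply spec_le_of_unit _ _ (norm_nonneg _)
    intro y hy
    exact hmax (by simpa [mem_sphere_iff_norm] using hy)

lemma TM_mul (A : Matrix m n ℝ) (B : Matrix n l ℝ) (x : EuclideanSpace ℝ l) :
    TM (A * B) x = TM A (TM B x) := by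
  ext i
  rw [TM_apply, show ((TM A (TM B x)) i) = (A *ᵥ (B *ᵥ x)) i from rfl, mulVec_mulVec]

lemma TM_one (x : EuclideanSpace ℝ n) : TM (1 : Matrix n n ℝ) x = x := by
  ext i; rw [TM_apply, one_mulVec]

lemma nsq_dot (x : EuclideanSpace ℝ m) : ‖x‖ ^ 2 = cv x ⬝ᵥ cv x := by
  rw [nsq]; simp [cv, dotProduct, sq]

lemma mulVec_dot (A : Matrix m n ℝ) (x : n → ℝ) (y : m → ℝ) :
    (A *ᵥ x) ⬝ᵥ y = x ⬝ᵥ (Aᵀ *ᵥ y) := by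
  rw [dotProduct_comm, dotProduct_mulVec, dotProduct_comm, Matrix.mulVec_transpose]

lemma TM_nsq (A : Matrix m n ℝ) (x : EuclideanSpace ℝ n) :
    ‖TM A x‖ ^ 2 = (A *ᵥ cv x) ⬝ᵥ (A *ᵥ cv x) := by
  rw [nsq_dot]; rfl

lemma norm_eq_of_sq {E F : Type*} [NormedAddCommGroup E] [NormedAddCommGroup F]
    (a : E) (b : F) (h : ‖a‖ ^ 2 = ‖b‖ ^ 2) : ‖a‖ = ‖b‖ := by
  nlinarith [norm_nonneg a, norm_nonneg b]

lemma iso_norm (U : Matrix m n ℝ) (hU : Uᵀ * U = 1) (x : EuclideanSpace ℝ n) :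
    ‖TM U x‖ = ‖x‖ := by
  apply norm_eq_of_sq
  rw [TM_nsq, nsq_dot, mulVec_dot, mulVec_mulVec, hU, one_mulVec]

lemma norm_TM_le (A : Matrix m n ℝ) (x : EuclideanSpace ℝ n) : ‖TM A x‖ ≤ ‖A‖ * ‖x‖ := by
  rw [norm_TM]; exact ContinuousLinearMap.le_opNorm _ x

lemma spec_iso_le (U : Matrix m n ℝ) (hU : Uᵀ * U = 1) : ‖U‖ ≤ 1 := by
  apply spec_le_bound _ _ zero_le_one
  intro x; rw [iso_norm U hU x, one_mul]

lemma spec_transpose (A : Matrix m n ℝ) : ‖Aᵀ‖ = ‖A‖ := by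
  have h : Aᴴ = Aᵀ := by ext i j; simp [conjTranspose_apply]
  rw [← h, Matrix.l2_opNorm_conjTranspose]

lemma PtP (U : Matrix m n ℝ) : (U * Uᵀ)ᵀ = U * Uᵀ := by
  rw [transpose_mul, transpose_transpose]

lemma PP (U : Matrix m n ℝ) (hU : Uᵀ * U = 1) : (U * Uᵀ) * (U * Uᵀ) = U * Uᵀ := by
  rw [Matrix.mul_assoc, ← Matrix.mul_assoc Uᵀ U Uᵀ, hU, Matrix.one_mul]

lemma pyth (U : Matrix m n ℝ) (hU : Uᵀ * U = 1) (y : EuclideanSpace ℝ m) :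
    ‖TM (U * Uᵀ) y‖ ^ 2 + ‖TM ((1 : Matrix m m ℝ) - U * Uᵀ) y‖ ^ 2 = ‖y‖ ^ 2 := by
  set P := U * Uᵀ with hP
  rw [TM_nsq, TM_nsq, nsq_dot]
  have h1 : (1 - P) *ᵥ cv y = cv y - P *ᵥ cv y := by
    rw [sub_mulVec, one_mulVec]
  have h2 : (P *ᵥ cv y) ⬝ᵥ (P *ᵥ cv y) = cv y ⬝ᵥ (P *ᵥ cv y) := by
    rw [mulVec_dot, PtP, mulVec_mulVec, PP U hU]
  have h3 : (P *ᵥ cv y) ⬝ᵥ cv y = cv y ⬝ᵥ (P *ᵥ cv y) :=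
    dotProduct_comm _ _
  rw [h1, sub_dotProduct, dotProduct_sub, dotProduct_sub]
  linarith [h2, h3]

lemma proj_le_one (U : Matrix m n ℝ) (hU : Uᵀ * U = 1) :
    ‖(1 : Matrix m m ℝ) - U * Uᵀ‖ ≤ 1 := by
  apply spec_le_bound _ _ zero_le_one
  intro x
  apply le_of_sq _ _ (norm_nonneg _) (by positivity)
  have := pyth U hU x
  nlinarith [sq_nonneg ‖TM (U * Uᵀ) x‖, norm_nonneg x]

lemma inv_le_of_one_le_mul {a t : ℝ} (ha : 0 < a) (h : 1 ≤ a * t) : a⁻¹ ≤ t := by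
  have h2 := mul_le_mul_of_nonneg_left h (inv_nonneg.mpr ha.le)
  rwa [mul_one, ← mul_assoc, inv_mul_cancel₀ ha.ne', one_mul] at h2

/-- key transpose trick: for a square matrix `g` and any unit vector `x`, there is a
unit vector `y` with `‖g y‖ ≤ ‖gᵀ x‖`. -/
lemma star_lemma [Nonempty n] (g : Matrix n n ℝ) (x : EuclideanSpace ℝ n) (hx : ‖x‖ = 1) :
    ∃ y : EuclideanSpace ℝ n, ‖y‖ = 1 ∧ ‖TM g y‖ ≤ ‖TM gᵀ x‖ := by
  by_cases hdet : IsUnit g.det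
  · have hTdet : IsUnit gᵀ.det := by rwa [det_transpose]
    have hxid : TM (gᵀ)⁻¹ (TM gᵀ x) = x := by
      rw [← TM_mul, nonsing_inv_mul _ hTdet, TM_one]
    have h1 : 1 ≤ ‖g⁻¹‖ * ‖TM gᵀ x‖ := by
      calc (1:ℝ) = ‖x‖ := hx.symm
        _ = ‖TM (gᵀ)⁻¹ (TM gᵀ x)‖ := by rw [hxid]
        _ ≤ ‖(gᵀ)⁻¹‖ * ‖TM gᵀ x‖ := norm_TM_le _ _
        _ = ‖g⁻¹‖ * ‖TM gᵀ x‖ := by rw [← transpose_nonsing_inv, spec_transpose]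
    have hpos : 0 < ‖g⁻¹‖ := by
      by_contra hc
      push_neg at hc
      have : ‖g⁻¹‖ = 0 := le_antisymm hc (norm_nonneg _)
      rw [this, zero_mul] at h1; linarith
    obtain ⟨y₀, hy₀, hat⟩ := exists_unit_norm_attained (g⁻¹ : Matrix n n ℝ)
    refine ⟨‖g⁻¹‖⁻¹ • (TM g⁻¹ y₀), ?_, ?_⟩
    · rw [norm_smul, hat, Real.norm_eq_abs, abs_of_nonneg (inv_nonneg.mpr hpos.le),
        inv_mul_cancel₀ hpos.ne']
    · have hgy : TM g (‖g⁻¹‖⁻¹ • (TM g⁻¹ y₀)) = ‖g⁻¹‖⁻¹ • y₀ := by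
        rw [_root_.map_smul, ← TM_mul, mul_nonsing_inv _ hdet, TM_one]
      rw [hgy, norm_smul, hy₀, Real.norm_eq_abs, abs_of_nonneg (inv_nonneg.mpr hpos.le),
        mul_one]
      exact inv_le_of_one_le_mul hpos h1
  · have hdet0 : g.det = 0 := by
      by_contra hc; exact hdet (isUnit_iff_ne_zero.mpr hc)
    obtain ⟨v, hv0, hgv⟩ := (Matrix.exists_mulVec_eq_zero_iff).mpr hdet0
    set e : EuclideanSpace ℝ n := (WithLp.equiv 2 (n → ℝ)).symm v with he
    have hene : e ≠ 0 := by
      intro h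
      apply hv0
      have := congrArg (WithLp.equiv 2 (n → ℝ)) h
      simpa [he] using this
    refine ⟨‖e‖⁻¹ • e, norm_smul_inv_norm hene, ?_⟩
    have hge : TM g e = 0 := by
      ext i
      rw [TM_apply]
      have : (g *ᵥ cv e) = 0 := hgv
      rw [show (cv e) = v from rfl] at this
      simp [show g *ᵥ (e : n → ℝ) = 0 from this]
    rw [_root_.map_smul, hge, smul_zero, norm_zero]
    exact norm_nonneg _

/-- squared norm formula: ‖(1-U₁U₁ᵀ)U₂ x‖² = ‖x‖² - ‖U₁ᵀU₂ x‖² -/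
lemma f_nsq (U₁ U₂ : Matrix m n ℝ) (hU₁ : U₁ᵀ * U₁ = 1) (hU₂ : U₂ᵀ * U₂ = 1)
    (x : EuclideanSpace ℝ n) :
    ‖TM (((1 : Matrix m m ℝ) - U₁ * U₁ᵀ) * U₂) x‖ ^ 2
      = ‖x‖ ^ 2 - ‖TM (U₁ᵀ * U₂) x‖ ^ 2 := by
  have h1 : TM (((1 : Matrix m m ℝ) - U₁ * U₁ᵀ) * U₂) x
      = TM ((1 : Matrix m m ℝ) - U₁ * U₁ᵀ) (TM U₂ x) := TM_mul _ _ _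
  have h2 := pyth U₁ hU₁ (TM U₂ x)
  have h3 : ‖TM (U₁ * U₁ᵀ) (TM U₂ x)‖ = ‖TM (U₁ᵀ * U₂) x‖ := by
    rw [← TM_mul, Matrix.mul_assoc, TM_mul]
    rw [iso_norm U₁ hU₁]
  rw [h1, ← iso_norm U₂ hU₂ x, ← h3]
  linarith [h2]

/-- symmetry: ‖(1-P₂)U₁‖ ≤ ‖(1-P₁)U₂‖ -/
lemma sym_le [Nonempty n] (U₁ U₂ : Matrix m n ℝ) (hU₁ : U₁ᵀ * U₁ = 1) (hU₂ : U₂ᵀ * U₂ = 1) :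
    ‖((1 : Matrix m m ℝ) - U₂ * U₂ᵀ) * U₁‖ ≤ ‖((1 : Matrix m m ℝ) - U₁ * U₁ᵀ) * U₂‖ := by
  apply spec_le_of_unit _ _ (norm_nonneg _)
  intro x hx
  obtain ⟨y, hy, hle⟩ := star_lemma (U₁ᵀ * U₂) x hx
  have htr : (U₁ᵀ * U₂)ᵀ = U₂ᵀ * U₁ := by rw [transpose_mul, transpose_transpose]
  have e1 : ‖TM (((1 : Matrix m m ℝ) - U₂ * U₂ᵀ) * U₁) x‖ ^ 2
      = ‖x‖ ^ 2 - ‖TM (U₂ᵀ * U₁) x‖ ^ 2 := f_nsq U₂ U₁ hU₂ hU₁ x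
  have e2 : ‖TM (((1 : Matrix m m ℝ) - U₁ * U₁ᵀ) * U₂) y‖ ^ 2
      = ‖y‖ ^ 2 - ‖TM (U₁ᵀ * U₂) y‖ ^ 2 := f_nsq U₁ U₂ hU₁ hU₂ y
  have e3 : ‖TM (((1 : Matrix m m ℝ) - U₁ * U₁ᵀ) * U₂) y‖
      ≤ ‖((1 : Matrix m m ℝ) - U₁ * U₁ᵀ) * U₂‖ := by
    have := norm_TM_le (((1 : Matrix m m ℝ) - U₁ * U₁ᵀ) * U₂) y
    rwa [hy, mul_one] at this
  rw [htr] at hle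
  apply le_of_sq _ _ (norm_nonneg _) (norm_nonneg _)
  rw [e1, hx]
  nlinarith [norm_nonneg (TM (U₂ᵀ * U₁) x), norm_nonneg (TM (U₁ᵀ * U₂) y),
    norm_nonneg (TM (((1 : Matrix m m ℝ) - U₁ * U₁ᵀ) * U₂) y), e2, hy]

lemma TM_sub (M N : Matrix m n ℝ) (x : EuclideanSpace ℝ n) :
    TM (M - N) x = TM M x - TM N x := by
  ext i
  rw [TM_apply, sub_mulVec]
  rfl

lemma cv_sub {u v : EuclideanSpace ℝ m} : cv (u - v) = cv u - cv v := rfl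
lemma cv_TM (A : Matrix m n ℝ) (x : EuclideanSpace ℝ n) : cv (TM A x) = A *ᵥ cv x := rfl

lemma mulU_absorb (U : Matrix m n ℝ) (hU : Uᵀ * U = 1) (M : Matrix n l ℝ) :
    (U * Uᵀ) * (U * M) = U * M := by
  rw [Matrix.mul_assoc U Uᵀ (U * M), ← Matrix.mul_assoc Uᵀ U M, hU, Matrix.one_mul]

lemma key {p₁ p₂ r : ℕ} (hr : 0 < r)
    (X₁ X₂ : Matrix (Fin p₁) (Fin p₂) ℝ)
    (U₁ U₂ : Matrix (Fin p₁) (Fin r) ℝ) (V₂ : Matrix (Fin p₂) (Fin r) ℝ)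
    (σ₂ : Fin r → ℝ)
    (hX₂ : X₂ = U₂ * Matrix.diagonal σ₂ * V₂ᵀ)
    (hU₁ : U₁ᵀ * U₁ = 1) (hU₂ : U₂ᵀ * U₂ = 1) (hV₂ : V₂ᵀ * V₂ = 1)
    (hσ₂ : Antitone σ₂) (hσ₂pos : ∀ i, 0 < σ₂ i)
    (hX₁0 : ((1 : Matrix (Fin p₁) (Fin p₁) ℝ) - U₁ * U₁ᵀ) * X₁ = 0) :
    ‖U₁ * U₁ᵀ - U₂ * U₂ᵀ‖ ≤ ‖X₁ - X₂‖ / σ₂ ⟨r - 1, Nat.sub_lt hr one_pos⟩ := by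
  haveI : Nonempty (Fin r) := ⟨⟨0, hr⟩⟩
  set s : ℝ := σ₂ ⟨r - 1, Nat.sub_lt hr one_pos⟩ with hs_def
  have hs : 0 < s := hσ₂pos _
  set Q₁ : Matrix (Fin p₁) (Fin p₁) ℝ := 1 - U₁ * U₁ᵀ with hQ₁
  set Q₂ : Matrix (Fin p₁) (Fin p₁) ℝ := 1 - U₂ * U₂ᵀ with hQ₂
  set W : Matrix (Fin p₂) (Fin r) ℝ := V₂ * Matrix.diagonal (fun i => (σ₂ i)⁻¹) with hW
  -- X₂ * W = U₂
  have e1 : X₂ * W = U₂ := by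
    rw [hX₂, hW, Matrix.mul_assoc (U₂ * Matrix.diagonal σ₂) V₂ᵀ _,
      ← Matrix.mul_assoc V₂ᵀ V₂ _, hV₂, Matrix.one_mul,
      Matrix.mul_assoc U₂ _ _, diagonal_mul_diagonal]
    have hfun : (fun i => σ₂ i * (σ₂ i)⁻¹) = fun _ : Fin r => (1:ℝ) :=
      funext fun i => mul_inv_cancel₀ (hσ₂pos i).ne'
    rw [hfun, Matrix.diagonal_one, Matrix.mul_one]
  -- (1-P₁) U₂ = (1-P₁)(X₂ - X₁) W
  have e2 : Q₁ * U₂ = Q₁ * (X₂ - X₁) * W := by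
    rw [Matrix.mul_sub Q₁ X₂ X₁, hX₁0, sub_zero, Matrix.mul_assoc Q₁ X₂ W, e1]
  -- bound on a := ‖Q₁ U₂‖
  have hDinv : ‖(Matrix.diagonal (fun i => (σ₂ i)⁻¹) : Matrix (Fin r) (Fin r) ℝ)‖ ≤ s⁻¹ := by
    apply spec_diagonal_le _ _ (inv_nonneg.mpr hs.le)
    intro i
    rw [abs_of_pos (inv_pos.mpr (hσ₂pos i))]
    have hle : s ≤ σ₂ i := by
      apply hσ₂
      exact Fin.mk_le_mk.mpr (Nat.le_sub_one_of_lt i.isLt)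
    exact inv_anti₀ hs hle
  have ha : ‖Q₁ * U₂‖ ≤ ‖X₁ - X₂‖ / s := by
    rw [e2, div_eq_mul_inv, norm_sub_rev X₁ X₂]
    calc ‖Q₁ * (X₂ - X₁) * W‖ ≤ ‖Q₁ * (X₂ - X₁)‖ * ‖W‖ := Matrix.l2_opNorm_mul _ _
      _ ≤ ‖X₂ - X₁‖ * s⁻¹ := by
          apply mul_le_mul
          · calc ‖Q₁ * (X₂ - X₁)‖ ≤ ‖Q₁‖ * ‖X₂ - X₁‖ := Matrix.l2_opNorm_mul _ _
              _ ≤ 1 * ‖X₂ - X₁‖ :=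
                  mul_le_mul_of_nonneg_right (proj_le_one U₁ hU₁) (norm_nonneg _)
              _ = ‖X₂ - X₁‖ := one_mul _
          · calc ‖W‖ ≤ ‖V₂‖ * ‖Matrix.diagonal (fun i => (σ₂ i)⁻¹)‖ :=
                  Matrix.l2_opNorm_mul _ _
              _ ≤ 1 * s⁻¹ := mul_le_mul (spec_iso_le V₂ hV₂) hDinv (norm_nonneg _) zero_le_one
              _ = s⁻¹ := one_mul _
          · exact norm_nonneg _
          · exact norm_nonneg _
  -- b ≤ a
  have hb : ‖Q₂ * U₁‖ ≤ ‖Q₁ * U₂‖ := sym_le U₁ U₂ hU₁ hU₂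
  -- combine
  have hcomb : ‖U₁ * U₁ᵀ - U₂ * U₂ᵀ‖ ≤ ‖Q₁ * U₂‖ := by
    set a : ℝ := ‖Q₁ * U₂‖ with ha_def
    apply spec_le_bound _ _ (norm_nonneg _)
    intro x
    set A : Matrix (Fin p₁) (Fin p₁) ℝ := Q₁ * (U₂ * U₂ᵀ) with hA
    set B : Matrix (Fin p₁) (Fin p₁) ℝ := (U₁ * U₁ᵀ) * Q₂ with hB
    have hBA : U₁ * U₁ᵀ - U₂ * U₂ᵀ = B - A := by
      rw [hA, hB, hQ₁, hQ₂]
      noncomm_ring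
    have hQ₂t : Q₂ᵀ = Q₂ := by rw [hQ₂, transpose_sub, transpose_one, PtP]
    have hBt : Bᵀ = Q₂ * (U₁ * U₁ᵀ) := by rw [hB, transpose_mul, hQ₂t, PtP]
    have hP1Q1 : (U₁ * U₁ᵀ) * Q₁ = 0 := by
      rw [hQ₁, Matrix.mul_sub, Matrix.mul_one, PP U₁ hU₁, sub_self]
    have hP2Q2 : (U₂ * U₂ᵀ) * Q₂ = 0 := by
      rw [hQ₂, Matrix.mul_sub, Matrix.mul_one, PP U₂ hU₂, sub_self]
    -- orthogonality
    have orth : (B *ᵥ cv x) ⬝ᵥ (A *ᵥ cv x) = 0 := by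
      rw [mulVec_dot, mulVec_mulVec, hBt]
      have : Q₂ * (U₁ * U₁ᵀ) * (Q₁ * (U₂ * U₂ᵀ)) = 0 := by
        rw [Matrix.mul_assoc (Q₂) (U₁ * U₁ᵀ) _, ← Matrix.mul_assoc (U₁ * U₁ᵀ) Q₁ _,
          hP1Q1, Matrix.zero_mul, Matrix.mul_zero]
      rw [hA, this, zero_mulVec, dotProduct_zero]
    -- Pythagoras split
    have hsplit : ‖TM (B - A) x‖ ^ 2 = ‖TM B x‖ ^ 2 + ‖TM A x‖ ^ 2 := by
      rw [TM_sub, nsq_dot, cv_sub, cv_TM, cv_TM, TM_nsq, TM_nsq,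
        sub_dotProduct, dotProduct_sub, dotProduct_sub]
      have orth2 : (A *ᵥ cv x) ⬝ᵥ (B *ᵥ cv x) = 0 := by
        rw [dotProduct_comm]; exact orth
      linarith [orth, orth2]
    -- bounds on pieces
    have hAx : ‖TM A x‖ ≤ a * ‖TM (U₂ * U₂ᵀ) x‖ := by
      have h1 : TM A x = TM (Q₁ * U₂) (TM U₂ᵀ x) := by
        rw [hA, ← Matrix.mul_assoc, TM_mul]
      have h2 : ‖TM (U₂ * U₂ᵀ) x‖ = ‖TM U₂ᵀ x‖ := by
        rw [TM_mul, iso_norm U₂ hU₂]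
      rw [h1, h2]
      exact norm_TM_le _ _
    have hBx : ‖TM B x‖ ≤ a * ‖TM Q₂ x‖ := by
      have hQQ : Q₂ * Q₂ = Q₂ := by
        rw [hQ₂, Matrix.sub_mul, Matrix.one_mul, ← hQ₂, hP2Q2, sub_zero]
      have hBQ : B * Q₂ = B := by
        rw [hB, Matrix.mul_assoc (U₁ * U₁ᵀ) Q₂ Q₂, hQQ]
      have h1 : TM B x = TM B (TM Q₂ x) := by
        conv_lhs => rw [← hBQ]
        rw [TM_mul]
      have h2 : ‖B‖ ≤ a := by
        rw [← spec_transpose B, hBt]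
        calc ‖Q₂ * (U₁ * U₁ᵀ)‖ = ‖(Q₂ * U₁) * U₁ᵀ‖ := by rw [Matrix.mul_assoc]
          _ ≤ ‖Q₂ * U₁‖ * ‖U₁ᵀ‖ := Matrix.l2_opNorm_mul _ _
          _ ≤ a * 1 := by
              apply mul_le_mul hb _ (norm_nonneg _) (norm_nonneg _)
              rw [spec_transpose]; exact spec_iso_le U₁ hU₁
          _ = a := mul_one _
      calc ‖TM B x‖ = ‖TM B (TM Q₂ x)‖ := by rw [← h1]
        _ ≤ ‖B‖ * ‖TM Q₂ x‖ := norm_TM_le _ _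
        _ ≤ a * ‖TM Q₂ x‖ := mul_le_mul_of_nonneg_right h2 (norm_nonneg _)
    have hpyth := pyth U₂ hU₂ x
    rw [← hQ₂] at hpyth
    have ha0 : 0 ≤ a := ha_def ▸ norm_nonneg (Q₁ * U₂)
    apply le_of_sq _ _ (norm_nonneg _) (mul_nonneg ha0 (norm_nonneg _))
    rw [hBA, hsplit]
    have h1 : ‖TM A x‖ ^ 2 ≤ a ^ 2 * ‖TM (U₂ * U₂ᵀ) x‖ ^ 2 := by
      have := pow_le_pow_left₀ (norm_nonneg (TM A x)) hAx 2
      rwa [mul_pow] at this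
    have h2 : ‖TM B x‖ ^ 2 ≤ a ^ 2 * ‖TM Q₂ x‖ ^ 2 := by
      have := pow_le_pow_left₀ (norm_nonneg (TM B x)) hBx 2
      rwa [mul_pow] at this
    have h3 : a ^ 2 * ‖TM (U₂ * U₂ᵀ) x‖ ^ 2 + a ^ 2 * ‖TM Q₂ x‖ ^ 2 = a ^ 2 * ‖x‖ ^ 2 := by
      rw [← mul_add, hpyth]
    rw [mul_pow]
    linarith [h1, h2, h3]
  exact le_trans hcomb ha

end SpecAux

/-- Perturbation bound for singular subspaces:
‖U₁U₁ᵀ − U₂U₂ᵀ‖ ≤ ‖X₁ − X₂‖ / max(σ_r(X₁), σ_r(X₂)). -/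
theorem stmt_5 {p₁ p₂ r : ℕ} (hr : 0 < r)
    (X₁ X₂ : Matrix (Fin p₁) (Fin p₂) ℝ)
    (U₁ U₂ : Matrix (Fin p₁) (Fin r) ℝ) (V₁ V₂ : Matrix (Fin p₂) (Fin r) ℝ)
    (σ₁ σ₂ : Fin r → ℝ)
    (hX₁ : X₁ = U₁ * Matrix.diagonal σ₁ * V₁ᵀ)
    (hX₂ : X₂ = U₂ * Matrix.diagonal σ₂ * V₂ᵀ)
    (hU₁ : U₁ᵀ * U₁ = 1) (hU₂ : U₂ᵀ * U₂ = 1)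
    (hV₁ : V₁ᵀ * V₁ = 1) (hV₂ : V₂ᵀ * V₂ = 1)
    (hσ₁ : Antitone σ₁) (hσ₂ : Antitone σ₂)
    (hσ₁pos : ∀ i, 0 < σ₁ i) (hσ₂pos : ∀ i, 0 < σ₂ i)
    (hrank₁ : X₁.rank = r) (hrank₂ : X₂.rank = r) :
    spec (U₁ * U₁ᵀ - U₂ * U₂ᵀ) ≤
      spec (X₁ - X₂) /
        max (σ₁ ⟨r - 1, Nat.sub_lt hr one_pos⟩) (σ₂ ⟨r - 1, Nat.sub_lt hr one_pos⟩) := by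
  have hX₁0 : ((1 : Matrix (Fin p₁) (Fin p₁) ℝ) - U₁ * U₁ᵀ) * X₁ = 0 := by
    rw [Matrix.sub_mul, Matrix.one_mul, hX₁, Matrix.mul_assoc U₁ (Matrix.diagonal σ₁) V₁ᵀ,
      mulU_absorb U₁ hU₁, sub_self]
  have hX₂0 : ((1 : Matrix (Fin p₁) (Fin p₁) ℝ) - U₂ * U₂ᵀ) * X₂ = 0 := by
    rw [Matrix.sub_mul, Matrix.one_mul, hX₂, Matrix.mul_assoc U₂ (Matrix.diagonal σ₂) V₂ᵀ,
      mulU_absorb U₂ hU₂, sub_self]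
  show ‖U₁ * U₁ᵀ - U₂ * U₂ᵀ‖ ≤ ‖X₁ - X₂‖ / _
  rcases le_total (σ₁ ⟨r - 1, Nat.sub_lt hr one_pos⟩) (σ₂ ⟨r - 1, Nat.sub_lt hr one_pos⟩)
    with h | h
  · rw [max_eq_right h]
    exact key hr X₁ X₂ U₁ U₂ V₂ σ₂ hX₂ hU₁ hU₂ hV₂ hσ₂ hσ₂pos hX₁0
  · rw [max_eq_left h, norm_sub_rev (U₁ * U₁ᵀ), norm_sub_rev X₁]
    exact key hr X₂ X₁ U₂ U₁ V₁ σ₁ hX₁ hU₂ hU₁ hV₁ hσ₁ hσ₁pos hX₂0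
end
end
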